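/- arXiv:1108.2695 — 4 statements merged into one kernel-verified Lean document; each statement's English description precedes it below -/
import Mathlib

section
/- Let E be a complete Hausdorff locally convex real topological vector space and let M ⊆ E be a (von Neumann) bounded subset. Then the barycenter map is continuous on the set of compactly supported Radon probability measures on E whose support is contained in M, equipped with the weak-* topology: if a net μ_α of such measures converges weakly to μ (i.e., ∫ φ dμ_α → ∫ φ dμ for every bounded continuous real function φ on E), then the barycenters b(μ_α) converge to b(μ) in E, where b(μ) is the unique point of E satisfying l(b(μ)) = ∫ l dμ for every continuous linear functional l on E. -/
open MeasureTheory Filter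

/-- `s` is the support of the measure `μ`: the smallest closed set whose complement
has `μ`-measure zero. -/
def IsMeasSupport {X : Type*} [TopologicalSpace X] [MeasurableSpace X]
    (μ : Measure X) (s : Set X) : Prop :=
  IsClosed s ∧ μ sᶜ = 0 ∧ ∀ t : Set X, IsClosed t → μ tᶜ = 0 → s ⊆ t

/-- Hahn–Banach: every continuous seminorm is the sup of the continuous linear
functionals dominated by it, attained at any given point. -/
lemma exists_dual_of_seminorm {E : Type*} [AddCommGroup E] [Module ℝ E]
    [TopologicalSpace E] [IsTopologicalAddGroup E]
    (p : Seminorm ℝ E) (hp : Continuous p) (v : E) :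
    ∃ l : E →L[ℝ] ℝ, (∀ x, |l x| ≤ p x) ∧ l v = p v := by
  have H : ∀ c : ℝ, c • v = 0 → c • (p v : ℝ) = 0 := by
    intro c hc
    rcases smul_eq_zero.mp hc with h | h
    · simp [h]
    · simp [h]
  set f := LinearPMap.mkSpanSingleton' (σ := RingHom.id ℝ) v (p v : ℝ) H with hf_def
  have Hdom : f.domain = (ℝ ∙ v) := LinearPMap.domain_mkSpanSingleton (σ := RingHom.id ℝ) v (p v : ℝ) H
  have hf : ∀ x : f.domain, f x ≤ p x := by
    rintro ⟨x, hx⟩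
    obtain ⟨c, hc⟩ := Submodule.mem_span_singleton.1 (Hdom ▸ hx)
    have hx' : (⟨x, hx⟩ : f.domain) = ⟨c • v, hc ▸ hx⟩ := Subtype.ext hc.symm
    rw [hx', LinearPMap.mkSpanSingleton'_apply]
    calc c • (p v : ℝ) = c * p v := rfl
    _ ≤ |c| * p v := mul_le_mul_of_nonneg_right (le_abs_self c) (apply_nonneg p v)
    _ = p (c • v) := (map_smul_eq_mul p c v).symm
  obtain ⟨g, hg_eq, hg_le⟩ := exists_extension_of_le_sublinear f p
    (fun c hc x => by rw [map_smul_eq_mul]; simp [abs_of_pos hc])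
    (fun x y => map_add_le_add p x y) hf
  have habs : ∀ x, |g x| ≤ p x := by
    intro x
    rw [abs_le]
    refine ⟨?_, hg_le x⟩
    have := hg_le (-x)
    rw [map_neg, map_neg_eq_map] at this
    linarith
  have hgv : g v = p v := by
    have hv : v ∈ f.domain := Hdom ▸ Submodule.mem_span_singleton_self v
    have := hg_eq ⟨v, hv⟩
    rw [this, LinearPMap.mkSpanSingleton'_apply_self]
  have hcont : Continuous g := by
    have h0 : ContinuousAt g 0 := by
      rw [ContinuousAt, map_zero]
      exact squeeze_zero_norm (fun x => by simpa using habs x)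
        (by simpa using (hp.tendsto 0))
    exact continuous_of_continuousAt_zero g h0
  exact ⟨⟨g, hcont⟩, habs, hgv⟩

/-- Let `E` be a complete Hausdorff locally convex real TVS and `M ⊆ E`
von Neumann bounded. The barycenter map is continuous, for the weak-* topology, on the
compactly supported Radon probability measures with support contained in `M`: if a net
of such measures converges weakly to such a measure, the corresponding barycenters
(the unique points integrating all continuous linear functionals correctly) converge. -/
theorem barycenter_continuous_on_bounded
    {E : Type*} [AddCommGroup E] [Module ℝ E] [UniformSpace E] [IsUniformAddGroup E]
    [ContinuousSMul ℝ E] [LocallyConvexSpace ℝ E] [T2Space E] [CompleteSpace E]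
    [MeasurableSpace E] [BorelSpace E]
    (M : Set E) (hM : Bornology.IsVonNBounded ℝ M)
    {ι : Type*} (F : Filter ι) (μs : ι → Measure E) (μ : Measure E)
    (hprob : ∀ i, IsProbabilityMeasure (μs i)) (hreg : ∀ i, (μs i).InnerRegular)
    (hsupp : ∀ i, ∃ K : Set E, IsCompact K ∧ IsMeasSupport (μs i) K ∧ K ⊆ M)
    (hμprob : IsProbabilityMeasure μ) (hμreg : μ.InnerRegular)
    (hμsupp : ∃ K : Set E, IsCompact K ∧ IsMeasSupport μ K ∧ K ⊆ M)
    (bs : ι → E) (b : E)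
    (hbs : ∀ i, ∀ l : E →L[ℝ] ℝ, l (bs i) = ∫ x, l x ∂(μs i))
    (hb : ∀ l : E →L[ℝ] ℝ, l b = ∫ x, l x ∂μ)
    (hweak : ∀ φ : BoundedContinuousFunction E ℝ,
      Tendsto (fun i => ∫ x, φ x ∂(μs i)) F (nhds (∫ x, φ x ∂μ))) :
    Tendsto bs F (nhds b) := by
  classical
  obtain ⟨K, hKc, hKsupp, hKM⟩ := hμsupp
  have hMae : ∀ᵐ y ∂μ, y ∈ M := by
    rw [MeasureTheory.ae_iff]
    exact measure_mono_null (fun y hy => Set.mem_compl hy) (measure_mono_null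
      (Set.compl_subset_compl.mpr hKM) hKsupp.2.1)
  have hMaei : ∀ i, ∀ᵐ y ∂(μs i), y ∈ M := by
    intro i
    obtain ⟨Ki, _, hKis, hKiM⟩ := hsupp i
    rw [MeasureTheory.ae_iff]
    exact measure_mono_null (fun y hy => Set.mem_compl hy) (measure_mono_null
      (Set.compl_subset_compl.mpr hKiM) hKis.2.1)
  have hKae : ∀ᵐ y ∂μ, y ∈ K := by
    rw [MeasureTheory.ae_iff]
    exact measure_mono_null (fun y hy => Set.mem_compl hy) hKsupp.2.1
  rw [← tendsto_sub_nhds_zero_iff]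
  rw [(nhds_hasBasis_absConvex_open ℝ E).tendsto_right_iff]
  rintro U ⟨hU0, hUo, hUbal, hUconv⟩
  have hUnhds : U ∈ nhds (0 : E) := hUo.mem_nhds hU0
  have hUabs : Absorbent ℝ U := absorbent_nhds_zero hUnhds
  set p : Seminorm ℝ E := gaugeSeminorm hUbal hUconv hUabs with hp_def
  have hpcont : Continuous p := continuous_gauge hUconv hUnhds
  suffices h : ∀ᶠ i in F, p (bs i - b) < 1 by
    filter_upwards [h] with i hi
    exact gauge_lt_one_subset_self hUconv hU0 hUabs hi
  -- a uniform bound for `p` on `M`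
  obtain ⟨C, hC0, hC⟩ : ∃ C > (0 : ℝ), ∀ x ∈ M, p x ≤ C := by
    have hV : p ⁻¹' Set.Iio 1 ∈ nhds (0 : E) := by
      refine (isOpen_Iio.preimage hpcont).mem_nhds ?_
      simp [Set.mem_preimage, map_zero]
    obtain ⟨r, hr, hball⟩ := (hM hV).exists_pos
    refine ⟨r, hr, fun x hx => ?_⟩
    rcases Set.mem_smul_set.mp
      (hball r (by rw [Real.norm_eq_abs, abs_of_pos hr]) hx) with ⟨y, hy, rfl⟩
    have hy1 : p y < 1 := hy
    calc p (r • y) = |r| * p y := map_smul_eq_mul p r y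
    _ ≤ |r| * 1 := mul_le_mul_of_nonneg_left hy1.le (abs_nonneg r)
    _ = r := by rw [mul_one, abs_of_pos hr]
  -- finite cover of `K` by small `p`-balls centered in `K`
  obtain ⟨T, hTK, hTcov⟩ := hKc.elim_nhds_subcover (fun x => {y | p (y - x) < 8⁻¹})
    (fun x _ => by
      refine (isOpen_Iio.preimage (hpcont.comp (continuous_id.sub continuous_const))).mem_nhds ?_
      simp [map_zero])
  -- bump functions
  set ψ : E → E → ℝ := fun x y => max 0 (min 1 (2 - 8 * p (y - x))) with hψ_def
  have hψ0 : ∀ x y, 0 ≤ ψ x y := fun x y => le_max_left _ _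
  have hψ1 : ∀ x y, ψ x y ≤ 1 := fun x y => max_le zero_le_one (min_le_left _ _)
  have hψcont : ∀ x, Continuous (ψ x) := fun x =>
    continuous_const.max (continuous_const.min (continuous_const.sub
      (continuous_const.mul (hpcont.comp (continuous_id.sub continuous_const)))))
  have hψsupport : ∀ x y, ψ x y ≠ 0 → p (y - x) < 4⁻¹ := by
    intro x y h
    by_contra hpge
    push_neg at hpge
    apply h
    have h1 : 2 - 8 * p (y - x) ≤ 0 := by linarith
    have h2 : min 1 (2 - 8 * p (y - x)) ≤ 0 := le_trans (min_le_right _ _) h1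
    exact max_eq_left h2
  have hψeq1 : ∀ x y, p (y - x) < 8⁻¹ → ψ x y = 1 := by
    intro x y h
    have h2 : (1 : ℝ) ≤ 2 - 8 * p (y - x) := by linarith
    show max 0 (min 1 (2 - 8 * p (y - x))) = 1
    rw [min_eq_left h2]
    exact max_eq_right zero_le_one
  set S : E → ℝ := fun y => ∑ x ∈ T, ψ x y with hS_def
  have hScont : Continuous S := continuous_finset_sum _ fun x _ => hψcont x
  have hS0 : ∀ y, 0 ≤ S y := fun y => Finset.sum_nonneg fun x _ => hψ0 x y
  set den : E → ℝ := fun y => max (S y) 1 with hden_def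
  have hden1 : ∀ y, 1 ≤ den y := fun y => le_max_right _ _
  have hdenpos : ∀ y, 0 < den y := fun y => lt_of_lt_of_le one_pos (hden1 y)
  set φ : E → E → ℝ := fun x y => ψ x y / den y with hφ_def
  set g : E → ℝ := fun y => min (S y) 1 with hg_def
  have hφ0 : ∀ x y, 0 ≤ φ x y := fun x y => div_nonneg (hψ0 x y) (hdenpos y).le
  have hφψ : ∀ x y, φ x y ≤ ψ x y := fun x y => div_le_self (hψ0 x y) (hden1 y)
  have hφ1 : ∀ x y, φ x y ≤ 1 := fun x y => le_trans (hφψ x y) (hψ1 x y)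
  have hφcont : ∀ x, Continuous (φ x) := fun x =>
    (hψcont x).div (hScont.max continuous_const) fun y => (hdenpos y).ne'
  have hsumφ : ∀ y, ∑ x ∈ T, φ x y = g y := by
    intro y
    rw [hg_def]
    show (∑ x ∈ T, ψ x y / den y) = min (S y) 1
    rw [← Finset.sum_div]
    rcases le_total (S y) 1 with h | h
    · rw [min_eq_left h, hden_def]
      show S y / max (S y) 1 = S y
      rw [max_eq_right h, div_one]
    · rw [min_eq_right h, hden_def]
      show S y / max (S y) 1 = 1
      rw [max_eq_left h, div_self (lt_of_lt_of_le one_pos h).ne']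
  have hg0 : ∀ y, 0 ≤ g y := fun y => le_min (hS0 y) zero_le_one
  have hg1 : ∀ y, g y ≤ 1 := fun y => min_le_right _ _
  have hgcont : Continuous g := hScont.min continuous_const
  have hgK : ∀ y ∈ K, g y = 1 := by
    intro y hy
    obtain ⟨x, hxT, hx⟩ := Set.mem_iUnion₂.1 (hTcov hy)
    have h1 : ψ x y = 1 := hψeq1 x y hx
    have h2 : (1 : ℝ) ≤ S y := h1 ▸ Finset.single_le_sum (fun z _ => hψ0 z y) hxT
    exact min_eq_right h2
  -- bounded continuous wrappers
  set gB : BoundedContinuousFunction E ℝ :=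
    BoundedContinuousFunction.ofNormedAddCommGroup g hgcont 1 (fun y => by
      rw [Real.norm_eq_abs, abs_of_nonneg (hg0 y)]; exact hg1 y) with hgB_def
  have hgBcoe : ∀ y, gB y = g y := fun y => rfl
  set φB : E → BoundedContinuousFunction E ℝ := fun x =>
    BoundedContinuousFunction.ofNormedAddCommGroup (φ x) (hφcont x) 1 (fun y => by
      rw [Real.norm_eq_abs, abs_of_nonneg (hφ0 x y)]; exact hφ1 x y) with hφB_def
  have hφBcoe : ∀ x y, φB x y = φ x y := fun x y => rfl
  -- integral facts
  have hintg : ∀ ν : Measure E, IsProbabilityMeasure ν → Integrable g ν := fun ν hν =>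
    Integrable.mono' (integrable_const 1) hgcont.aestronglyMeasurable
      (Eventually.of_forall fun y => by
        rw [Real.norm_eq_abs, abs_of_nonneg (hg0 y)]; exact hg1 y)
  have hintφ : ∀ x, ∀ ν : Measure E, IsProbabilityMeasure ν → Integrable (φ x) ν :=
    fun x ν hν =>
    Integrable.mono' (integrable_const 1) (hφcont x).aestronglyMeasurable
      (Eventually.of_forall fun y => by
        rw [Real.norm_eq_abs, abs_of_nonneg (hφ0 x y)]; exact hφ1 x y)
  have hgμ : ∫ y, g y ∂μ = 1 := by
    have : g =ᵐ[μ] fun _ => (1 : ℝ) := by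
      filter_upwards [hKae] with y hy using hgK y hy
    rw [integral_congr_ae this]
    simp
  have hgint : Tendsto (fun i => ∫ y, g y ∂(μs i)) F (nhds 1) := by
    have h := hweak gB
    simp only [hgBcoe] at h
    rwa [hgμ] at h
  -- the error functional
  set R : ι → ℝ := fun i => C * (1 - ∫ y, g y ∂(μs i)) +
    C * ∑ x ∈ T, |(∫ y, φ x y ∂(μs i)) - ∫ y, φ x y ∂μ| with hR_def
  have hRlim : Tendsto R F (nhds 0) := by
    have h1 : Tendsto (fun i => C * (1 - ∫ y, g y ∂(μs i))) F (nhds (C * (1 - 1))) :=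
      (tendsto_const_nhds.sub hgint).const_mul C
    have h2 : ∀ x ∈ T, Tendsto
        (fun i => |(∫ y, φ x y ∂(μs i)) - ∫ y, φ x y ∂μ|) F (nhds 0) := by
      intro x _
      have h := (hweak (φB x)).sub_const (∫ y, (φB x) y ∂μ)
      simp only [hφBcoe, sub_self] at h
      simpa using h.abs
    have h3 := tendsto_finset_sum T h2
    have h4 : Tendsto (fun i => C * ∑ x ∈ T,
        |(∫ y, φ x y ∂(μs i)) - ∫ y, φ x y ∂μ|) F (nhds (C * ∑ _x ∈ T, (0:ℝ))) :=
      h3.const_mul C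
    have := h1.add h4
    simpa using this
  -- key estimate
  have key : ∀ i, (p (bs i - b) : ℝ) ≤ 2⁻¹ + R i := by
    intro i
    obtain ⟨l, hl, hlv⟩ := exists_dual_of_seminorm p hpcont (bs i - b)
    set h : E → ℝ := fun y => ∑ x ∈ T, l x * φ x y with hh_def
    have hlT : ∀ x ∈ T, |l x| ≤ C := fun x hx =>
      le_trans (hl x) (hC x (hKM (hTK x hx)))
    have hhcont : Continuous h := continuous_finset_sum _ fun x _ =>
      continuous_const.mul (hφcont x)
    have hhbound : ∀ y, |h y| ≤ C := by
      intro y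
      calc |h y| ≤ ∑ x ∈ T, |l x * φ x y| := Finset.abs_sum_le_sum_abs _ _
      _ ≤ ∑ x ∈ T, C * φ x y := Finset.sum_le_sum fun x hx => by
          rw [abs_mul, abs_of_nonneg (hφ0 x y)]
          exact mul_le_mul_of_nonneg_right (hlT x hx) (hφ0 x y)
      _ = C * g y := by rw [← Finset.mul_sum, hsumφ]
      _ ≤ C * 1 := mul_le_mul_of_nonneg_left (hg1 y) hC0.le
      _ = C := mul_one C
    have hintl : ∀ ν : Measure E, IsProbabilityMeasure ν → (∀ᵐ y ∂ν, y ∈ M) →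
        Integrable (fun y => l y) ν := by
      intro ν hν hae
      refine Integrable.mono' (integrable_const C) l.continuous.aestronglyMeasurable ?_
      filter_upwards [hae] with y hy
      rw [Real.norm_eq_abs]
      exact le_trans (hl y) (hC y hy)
    have hinth : ∀ ν : Measure E, IsProbabilityMeasure ν → Integrable h ν := by
      intro ν hν
      refine Integrable.mono' (integrable_const C) hhcont.aestronglyMeasurable ?_
      exact Eventually.of_forall fun y => by rw [Real.norm_eq_abs]; exact hhbound y
    -- pointwise estimate on M
    have hpoint : ∀ y ∈ M, |l y - h y| ≤ 4⁻¹ + C * (1 - g y) := by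
      intro y hy
      have e1 : ∑ x ∈ T, φ x y * (l y - l x) = g y * l y - ∑ x ∈ T, l x * φ x y := by
        rw [← hsumφ y, Finset.sum_mul, ← Finset.sum_sub_distrib]
        exact Finset.sum_congr rfl fun x _ => by ring
      have hdecomp : l y - h y = l y * (1 - g y) + ∑ x ∈ T, φ x y * (l y - l x) := by
        rw [hh_def, e1]; ring
      have hterm : ∀ x ∈ T, |φ x y * (l y - l x)| ≤ φ x y * 4⁻¹ := by
        intro x hx
        rcases eq_or_ne (ψ x y) 0 with h0 | h0
        · have : φ x y = 0 := by rw [hφ_def]; show ψ x y / den y = 0; rw [h0, zero_div]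
          simp [this]
        · have hplt := hψsupport x y h0
          have hll : |l y - l x| ≤ 4⁻¹ := by
            have e2 : l y - l x = l (y - x) := (map_sub l y x).symm
            rw [e2]
            exact le_trans (hl _) hplt.le
          rw [abs_mul, abs_of_nonneg (hφ0 x y)]
          exact mul_le_mul_of_nonneg_left hll (hφ0 x y)
      have hsum : |∑ x ∈ T, φ x y * (l y - l x)| ≤ 4⁻¹ := by
        calc |∑ x ∈ T, φ x y * (l y - l x)| ≤ ∑ x ∈ T, |φ x y * (l y - l x)| :=
            Finset.abs_sum_le_sum_abs _ _
        _ ≤ ∑ x ∈ T, φ x y * 4⁻¹ := Finset.sum_le_sum hterm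
        _ = g y * 4⁻¹ := by rw [← Finset.sum_mul, hsumφ]
        _ ≤ 1 * 4⁻¹ := mul_le_mul_of_nonneg_right (hg1 y) (by norm_num)
        _ = 4⁻¹ := one_mul _
      have h1g : (0:ℝ) ≤ 1 - g y := by linarith [hg1 y]
      have hstep1 : |l y - h y| ≤ |l y * (1 - g y)| + |∑ x ∈ T, φ x y * (l y - l x)| := by
        rw [hdecomp]
        exact abs_add_le _ _
      have e3 : |l y * (1 - g y)| = |l y| * (1 - g y) := by
        rw [abs_mul, abs_of_nonneg h1g]
      have e4 : |l y| ≤ C := le_trans (hl y) (hC y hy)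
      have e5 := mul_le_mul_of_nonneg_right e4 h1g
      rw [e3] at hstep1
      linarith [hsum]
    -- integral difference estimate
    have hdiff : ∀ ν : Measure E, IsProbabilityMeasure ν → (∀ᵐ y ∂ν, y ∈ M) →
        |(∫ y, l y ∂ν) - ∫ y, h y ∂ν| ≤ 4⁻¹ + C * (1 - ∫ y, g y ∂ν) := by
      intro ν hν hae
      have hil := hintl ν hν hae
      have hih := hinth ν hν
      have hig := hintg ν hν
      rw [← integral_sub hil hih]
      have step1 : |∫ y, (l y - h y) ∂ν| ≤ ∫ y, |l y - h y| ∂ν := by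
        simpa [Real.norm_eq_abs] using
          norm_integral_le_integral_norm (μ := ν) (fun y => l y - h y)
      have hig1 : Integrable (fun y => (1:ℝ) - g y) ν := (integrable_const 1).sub hig
      have hig2 : Integrable (fun y => C * ((1:ℝ) - g y)) ν := hig1.const_mul C
      have hig3 : Integrable (fun y => (4:ℝ)⁻¹ + C * (1 - g y)) ν :=
        (integrable_const _).add hig2
      have step2 : (∫ y, |l y - h y| ∂ν) ≤ ∫ y, (4⁻¹ + C * (1 - g y)) ∂ν := by
        refine integral_mono_ae (hil.sub hih).abs hig3 ?_
        filter_upwards [hae] with y hy using hpoint y hy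
      have step3 : (∫ y, (4⁻¹ + C * (1 - g y)) ∂ν) = 4⁻¹ + C * (1 - ∫ y, g y ∂ν) := by
        rw [integral_add (integrable_const _) hig2, integral_const_mul,
          integral_sub (integrable_const 1) hig]
        simp
      calc |∫ y, (l y - h y) ∂ν| ≤ ∫ y, |l y - h y| ∂ν := step1
      _ ≤ ∫ y, (4⁻¹ + C * (1 - g y)) ∂ν := step2
      _ = 4⁻¹ + C * (1 - ∫ y, g y ∂ν) := step3
    -- middle term
    have hmul : ∀ ν : Measure E, IsProbabilityMeasure ν →
        (∫ y, h y ∂ν) = ∑ x ∈ T, l x * ∫ y, φ x y ∂ν := by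
      intro ν hν
      rw [hh_def]
      rw [integral_finset_sum T fun x _ => (hintφ x ν hν).const_mul (l x)]
      exact Finset.sum_congr rfl fun x _ => integral_const_mul _ _
    have hmid : |(∫ y, h y ∂(μs i)) - ∫ y, h y ∂μ| ≤
        C * ∑ x ∈ T, |(∫ y, φ x y ∂(μs i)) - ∫ y, φ x y ∂μ| := by
      rw [hmul _ (hprob i), hmul _ hμprob, ← Finset.sum_sub_distrib]
      calc |∑ x ∈ T, (l x * (∫ y, φ x y ∂(μs i)) - l x * ∫ y, φ x y ∂μ)|
          ≤ ∑ x ∈ T, |l x * (∫ y, φ x y ∂(μs i)) - l x * ∫ y, φ x y ∂μ| :=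
            Finset.abs_sum_le_sum_abs _ _
      _ ≤ ∑ x ∈ T, C * |(∫ y, φ x y ∂(μs i)) - ∫ y, φ x y ∂μ| := by
          refine Finset.sum_le_sum fun x hx => ?_
          rw [← mul_sub, abs_mul]
          exact mul_le_mul_of_nonneg_right (hlT x hx) (abs_nonneg _)
      _ = C * ∑ x ∈ T, |(∫ y, φ x y ∂(μs i)) - ∫ y, φ x y ∂μ| := by
          rw [Finset.mul_sum]
    -- assemble
    have e1 : (p (bs i - b) : ℝ) = (∫ y, l y ∂(μs i)) - ∫ y, l y ∂μ := by
      rw [← hlv, map_sub, hbs i l, hb l]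
    have d1 := hdiff (μs i) (hprob i) (hMaei i)
    have d2 := hdiff μ hμprob hMae
    rw [hgμ] at d2
    have habs1 := abs_sub_abs_le_abs_sub ((∫ y, l y ∂(μs i))) (∫ y, l y ∂μ)
    have split : (∫ y, l y ∂(μs i)) - ∫ y, l y ∂μ =
        ((∫ y, l y ∂(μs i)) - ∫ y, h y ∂(μs i)) +
        ((∫ y, h y ∂(μs i)) - ∫ y, h y ∂μ) +
        ((∫ y, h y ∂μ) - ∫ y, l y ∂μ) := by ring
    have final : (∫ y, l y ∂(μs i)) - ∫ y, l y ∂μ ≤ 2⁻¹ + R i := by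
      rw [split, hR_def]
      have a1 : (∫ y, l y ∂(μs i)) - ∫ y, h y ∂(μs i) ≤
          4⁻¹ + C * (1 - ∫ y, g y ∂(μs i)) := le_trans (le_abs_self _) d1
      have a2 : (∫ y, h y ∂(μs i)) - ∫ y, h y ∂μ ≤
          C * ∑ x ∈ T, |(∫ y, φ x y ∂(μs i)) - ∫ y, φ x y ∂μ| :=
        le_trans (le_abs_self _) hmid
      have a3 : (∫ y, h y ∂μ) - ∫ y, l y ∂μ ≤ 4⁻¹ + C * (1 - 1) := by
        have := le_trans (le_abs_self _) (by rwa [abs_sub_comm] at d2)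
        linarith
      linarith
    rw [e1]
    exact final
  have hev : ∀ᶠ i in F, R i < 2⁻¹ :=
    hRlim.eventually_lt_const (by norm_num : (0:ℝ) < 2⁻¹)
  filter_upwards [hev] with i hi
  have := key i
  linarith
end

section
/- Let f : X → Y be a perfect continuous surjection between Tychonoff topological spaces admitting an averaging operator with compact supports, and suppose Y is a k-space (compactly generated space). Let E be a complete Hausdorff locally convex real topological vector space. Then there exists a linear operator T : C(X,E) → C(Y,E) such that: (i) T(h)(y) belongs to the closed convex hull of h(f⁻¹(y)) for all y ∈ Y and h ∈ C(X,E); (ii) T(φ ∘ f) = φ for every φ ∈ C(Y,E); (iii) T is continuous when both C(X,E) and C(Y,E) carry the topology of uniform convergence, and also when both carry the topology of uniform convergence on compact sets. -/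
open MeasureTheory
open scoped UniformConvergence

/-- A space is a k-space (compactly generated) if a set is closed whenever its
intersection with every compact subspace is closed there. -/
def KSpace (X : Type*) [TopologicalSpace X] : Prop :=
  ∀ s : Set X, (∀ K : Set X, IsCompact K → IsClosed {x : K | (x : X) ∈ s}) → IsClosed s

open Set Filter Topology
open scoped Uniformity

section Aux

variable {X E : Type*} [TopologicalSpace X] [MeasurableSpace X] [OpensMeasurableSpace X]
  [AddCommGroup E] [Module ℝ E] [UniformSpace E] [IsUniformAddGroup E]
  [ContinuousSMul ℝ E] [LocallyConvexSpace ℝ E] [T2Space E] [CompleteSpace E]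

omit [T2Space E] [CompleteSpace E] in
lemma my_integrable (μ : Measure X) [IsProbabilityMeasure μ] {K : Set X} (hK : IsCompact K)
    (hKc : μ Kᶜ = 0) {φ : X → ℝ} (hφ : Continuous φ) : Integrable φ μ := by
  obtain ⟨C, hC⟩ := hK.exists_bound_of_continuousOn hφ.continuousOn
  refine ⟨hφ.aestronglyMeasurable, HasFiniteIntegral.of_bounded (C := C) ?_⟩
  filter_upwards [(measure_eq_zero_iff_ae_notMem.mp hKc)] with x hx
  exact hC x (not_not.mp hx)

omit [T2Space E] in
lemma exists_bary (μ : Measure X) [IsProbabilityMeasure μ] {K : Set X} (hK : IsCompact K)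
    (hKc : μ Kᶜ = 0) (h : C(X, E)) :
    ∃ p ∈ closure (convexHull ℝ (⇑h '' K)), ∀ ℓ : E →L[ℝ] ℝ, ℓ p = ∫ x, ℓ (h x) ∂μ := by
  set Q := closure (convexHull ℝ (⇑h '' K)) with hQdef
  have hQcvx : Convex ℝ Q := (convex_convexHull ℝ _).closure
  have hQcpt : IsCompact Q := TotallyBounded.isCompact_of_isClosed
    ((totallyBounded_convexHull.mpr (hK.image h.continuous).totallyBounded).closure) isClosed_closure
  have hKmem : ∀ x ∈ K, h x ∈ Q := fun x hx =>
    subset_closure (subset_convexHull ℝ _ (mem_image_of_mem _ hx))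
  have key : ∀ t : Finset (E →L[ℝ] ℝ),
      (Q ∩ ⋂ ℓ ∈ t, {p | ℓ p = ∫ x, ℓ (h x) ∂μ}).Nonempty := by
    intro t
    classical
    set ι := {ℓ : E →L[ℝ] ℝ // ℓ ∈ t}
    set L : E →L[ℝ] (ι → ℝ) := ContinuousLinearMap.pi (fun i => i.1) with hL
    set v : ι → ℝ := fun i => ∫ x, i.1 (h x) ∂μ with hv
    have hsc : IsCompact (L '' Q) := hQcpt.image L.continuous
    have hscvx : Convex ℝ (L '' Q) := hQcvx.linear_image L.toLinearMap
    have hint : ∀ ℓ : E →L[ℝ] ℝ, Integrable (fun x => ℓ (h x)) μ := fun ℓ =>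
      my_integrable μ hK hKc (ℓ.continuous.comp h.continuous)
    have hv_mem : v ∈ L '' Q := by
      by_contra hv'
      obtain ⟨F, c, hFv, hFs⟩ := geometric_hahn_banach_point_closed hscvx hsc.isClosed hv'
      have hFlin : ∀ w : E, F (L w) = ∑ i : ι, (i.1 w) * F (fun j => if i = j then 1 else 0) := by
        intro w
        have := LinearMap.pi_apply_eq_sum_univ (F.toLinearMap) (L w)
        simpa [L, smul_eq_mul] using this
      have hintsum : ∫ x, F (L (h x)) ∂μ = F v := by
        calc ∫ x, F (L (h x)) ∂μ
            = ∫ x, ∑ i : ι, (i.1 (h x)) * F (fun j => if i = j then 1 else 0) ∂μ := by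
              simp_rw [hFlin]
          _ = ∑ i : ι, ∫ x, (i.1 (h x)) * F (fun j => if i = j then 1 else 0) ∂μ := by
              refine integral_finset_sum _ (fun i _ => (hint i.1).mul_const _)
          _ = ∑ i : ι, (∫ x, i.1 (h x) ∂μ) * F (fun j => if i = j then 1 else 0) := by
              simp_rw [integral_mul_const]
          _ = F v := by
              have := LinearMap.pi_apply_eq_sum_univ (F.toLinearMap) v
              simp only [smul_eq_mul] at this
              simpa [hv] using this.symm
      have hae : (fun _ : X => c) ≤ᵐ[μ] fun x => F (L (h x)) := by
        filter_upwards [(measure_eq_zero_iff_ae_notMem.mp hKc)] with x hx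
        exact (hFs _ (mem_image_of_mem L (hKmem x (not_not.mp hx)))).le
      have hle : c ≤ ∫ x, F (L (h x)) ∂μ := by
        have := integral_mono_ae (integrable_const c) (hint (F.comp L)) hae
        simpa using this
      rw [hintsum] at hle
      exact absurd hFv (not_lt.mpr hle)
    obtain ⟨p, hpQ, hLp⟩ := hv_mem
    refine ⟨p, hpQ, ?_⟩
    simp only [Set.mem_iInter, Set.mem_setOf_eq]
    intro ℓ hℓ
    have := congrFun hLp ⟨ℓ, hℓ⟩
    simpa [L, v] using this
  obtain ⟨p, hpQ, hp⟩ := hQcpt.inter_iInter_nonempty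
    (fun ℓ : E →L[ℝ] ℝ => {p | ℓ p = ∫ x, ℓ (h x) ∂μ})
    (fun ℓ => isClosed_eq ℓ.continuous continuous_const) (fun t => key t)
  exact ⟨p, hpQ, fun ℓ => Set.mem_iInter.mp hp ℓ⟩

omit [TopologicalSpace X] [MeasurableSpace X] [OpensMeasurableSpace X] [CompleteSpace E] in
lemma my_dual_eq {p q : E} (hpq : ∀ ℓ : E →L[ℝ] ℝ, ℓ p = ℓ q) : p = q := by
  by_contra hne
  obtain ⟨ℓ, hℓ⟩ := SeparatingDual.exists_ne_zero (R := ℝ) (sub_ne_zero.mpr hne)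
  rw [map_sub] at hℓ
  exact hℓ (sub_eq_zero.mpr (hpq ℓ))

omit [TopologicalSpace X] [MeasurableSpace X] [OpensMeasurableSpace X] [T2Space E]
  [CompleteSpace E] in
lemma my_closed_convex_nhds {V : Set E} (hV : V ∈ 𝓝 (0 : E)) :
    ∃ D : Set E, D ∈ 𝓝 (0 : E) ∧ IsClosed D ∧ Convex ℝ D ∧ D ⊆ V := by
  obtain ⟨V₀, hV₀, hV₀c, hV₀V⟩ := exists_mem_nhds_isClosed_subset hV
  obtain ⟨W, hW, hWcvx, hWV₀⟩ :=
    (locallyConvexSpace_iff_exists_convex_subset_zero ℝ E).mp ‹_› V₀ hV₀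
  refine ⟨closure W, Filter.mem_of_superset hW subset_closure, isClosed_closure,
    hWcvx.closure, ?_⟩
  exact (closure_mono hWV₀).trans ((hV₀c.closure_subset).trans hV₀V)

omit [TopologicalSpace X] [MeasurableSpace X] [OpensMeasurableSpace X] [CompleteSpace E] in
lemma my_continuous_into_compact {Z : Type*} [TopologicalSpace Z] (φ : Z → E) (Q : Set E)
    (hQ : IsCompact Q) (hmem : ∀ z, φ z ∈ Q)
    (hc : ∀ ℓ : E →L[ℝ] ℝ, Continuous fun z => ℓ (φ z)) : Continuous φ := by
  haveI := isCompact_iff_compactSpace.mp hQ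
  set j : Q → ((E →L[ℝ] ℝ) → ℝ) := fun q ℓ => ℓ q.1 with hj
  have hjc : Continuous j := continuous_pi fun ℓ => ℓ.continuous.comp continuous_subtype_val
  have hjinj : Function.Injective j := by
    intro a b hab
    exact Subtype.ext (my_dual_eq fun ℓ => congrFun hab ℓ)
  have hemb := hjc.isClosedEmbedding hjinj
  have hψ : Continuous fun z => (⟨φ z, hmem z⟩ : Q) := by
    rw [hemb.isEmbedding.continuous_iff]
    exact continuous_pi fun ℓ => hc ℓ
  exact continuous_subtype_val.comp hψ

end Aux

lemma my_kspace_continuous {Y E : Type*} [TopologicalSpace Y] [TopologicalSpace E]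
    (hY : KSpace Y) (p : Y → E)
    (hp : ∀ C : Set Y, IsCompact C → Continuous fun z : C => p z.1) : Continuous p := by
  rw [continuous_iff_isClosed]
  intro A hA
  apply hY
  intro C hC
  exact hA.preimage (hp C hC)

/-- Let `f : X → Y` be a perfect continuous surjection of Tychonoff spaces
admitting an averaging operator with compact supports, with `Y` a k-space, and let `E`
be a complete Hausdorff locally convex real TVS. Then there is a linear operator
`T : C(X,E) → C(Y,E)` with values in the closed convex hulls of the fiber images, which
is a right inverse to composition with `f`, and is continuous for the uniform topology
and for the topology of uniform convergence on compact sets. -/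
theorem averaging_operator_kspace
    {X Y E : Type*} [TopologicalSpace X] [T35Space X] [TopologicalSpace Y] [T35Space Y]
    [MeasurableSpace X] [BorelSpace X] (hY : KSpace Y)
    (f : X → Y) (hf : Continuous f) (hfsurj : Function.Surjective f)
    (hfclosed : IsClosedMap f) (hffib : ∀ y, IsCompact (f ⁻¹' {y}))
    (g : Y → {μ : ProbabilityMeasure X //
        μ.toMeasure.InnerRegular ∧ ∃ K : Set X, IsCompact K ∧ IsMeasSupport μ.toMeasure K})
    (hg : Topology.IsEmbedding g)
    (hgsupp : ∀ (y : Y) (K : Set X), IsMeasSupport (g y).1.toMeasure K → K ⊆ f ⁻¹' {y})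
    [AddCommGroup E] [Module ℝ E] [UniformSpace E] [IsUniformAddGroup E]
    [ContinuousSMul ℝ E] [LocallyConvexSpace ℝ E] [T2Space E] [CompleteSpace E] :
    ∃ T : C(X, E) → C(Y, E),
      (∀ h₁ h₂, T (h₁ + h₂) = T h₁ + T h₂) ∧
      (∀ (c : ℝ) h, T (c • h) = c • T h) ∧
      -- (i) values in closed convex hulls of fiber images
      (∀ (h : C(X, E)) (y : Y), T h y ∈ closure (convexHull ℝ (⇑h '' (f ⁻¹' {y})))) ∧
      -- (ii) averaging property
      (∀ φ : C(Y, E), T (φ.comp ⟨f, hf⟩) = φ) ∧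
      -- (iii) continuity for the topology of uniform convergence on compact sets
      Continuous T ∧
      -- (iii) continuity for the topology of uniform convergence
      Continuous (fun h : {u : X →ᵤ E // Continuous (UniformFun.toFun u)} =>
        (⟨UniformFun.ofFun ⇑(T ⟨UniformFun.toFun h.1, h.2⟩),
          (T ⟨UniformFun.toFun h.1, h.2⟩).continuous⟩ :
          {u : Y →ᵤ E // Continuous (UniformFun.toFun u)})) := by
  classical
  set μm : Y → Measure X := fun y => (g y).1.toMeasure with hμm
  haveI hprob : ∀ y, IsProbabilityMeasure (μm y) := fun y => (g y).1.2
  have hnull : ∀ y, μm y ((f ⁻¹' {y})ᶜ) = 0 := by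
    intro y
    obtain ⟨K, hK, hKs⟩ := (g y).2.2
    exact measure_mono_null (compl_subset_compl.mpr (hgsupp y K hKs)) hKs.2.1
  have hae : ∀ y, ∀ᵐ x ∂μm y, f x = y := by
    intro y
    filter_upwards [measure_eq_zero_iff_ae_notMem.mp (hnull y)] with x hx
    exact not_not.mp hx
  have hproper : IsProperMap f :=
    isProperMap_iff_isClosedMap_and_compact_fibers.mpr ⟨hf, hfclosed, hffib⟩
  -- the barycenter map
  have hbary : ∀ (h : C(X, E)) (y : Y), ∃ p ∈ closure (convexHull ℝ (⇑h '' (f ⁻¹' {y}))),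
      ∀ ℓ : E →L[ℝ] ℝ, ℓ p = ∫ x, ℓ (h x) ∂μm y := fun h y =>
    exists_bary (μm y) (hffib y) (hnull y) h
  choose p hpmem hpdual using hbary
  have hint : ∀ (h : C(X, E)) (y : Y) (ℓ : E →L[ℝ] ℝ),
      Integrable (fun x => ℓ (h x)) (μm y) := fun h y ℓ =>
    my_integrable (μm y) (hffib y) (hnull y) (ℓ.continuous.comp h.continuous)
  have hpunique : ∀ (h : C(X, E)) (y : Y) (q : E),
      (∀ ℓ : E →L[ℝ] ℝ, ℓ q = ∫ x, ℓ (h x) ∂μm y) → p h y = q := fun h y q hq =>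
    my_dual_eq fun ℓ => (hpdual h y ℓ).trans (hq ℓ).symm
  -- algebraic identities
  have hadd : ∀ (h₁ h₂ : C(X, E)) (y : Y), p (h₁ + h₂) y = p h₁ y + p h₂ y := by
    intro h₁ h₂ y
    apply hpunique
    intro ℓ
    rw [map_add, hpdual, hpdual, ← integral_add (hint h₁ y ℓ) (hint h₂ y ℓ)]
    congr 1
    funext x
    simp
  have hsmul : ∀ (c : ℝ) (h : C(X, E)) (y : Y), p (c • h) y = c • p h y := by
    intro c h y
    apply hpunique
    intro ℓ
    rw [ℓ.map_smul, smul_eq_mul, hpdual, ← integral_const_mul]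
    congr 1
    funext x
    simp
  -- continuity in y of the functionals
  have hcontI : ∀ (h : C(X, E)) (C : Set Y), IsCompact C → ∀ ℓ : E →L[ℝ] ℝ,
      Continuous fun z : C => ∫ x, ℓ (h x) ∂μm z.1 := by
    intro h C hC ℓ
    have hK₀ : IsCompact (f ⁻¹' C) := hproper.isCompact_preimage hC
    obtain ⟨M₀, hM₀⟩ :=
      hK₀.exists_bound_of_continuousOn (ℓ.continuous.comp h.continuous).continuousOn
    set M := max M₀ 0 with hM
    have hMnn : (0 : ℝ) ≤ M := le_max_right _ _
    have hbd : ∀ x : X, ‖max (-M) (min (ℓ (h x)) M)‖ ≤ M := by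
      intro x
      rw [Real.norm_eq_abs, abs_le]
      refine ⟨le_max_left _ _, max_le (by linarith) (min_le_right _ _)⟩
    set θ : BoundedContinuousFunction X ℝ :=
      BoundedContinuousFunction.ofNormedAddCommGroup _
        (continuous_const.max ((ℓ.continuous.comp h.continuous).min continuous_const)) M hbd
      with hθ
    have heq : (fun z : C => ∫ x, ℓ (h x) ∂μm z.1) = fun z : C => ∫ x, θ x ∂μm z.1 := by
      funext z
      refine integral_congr_ae ?_
      filter_upwards [hae z.1] with x hx
      have hxK₀ : x ∈ f ⁻¹' C := by simp [Set.mem_preimage, hx, z.2]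
      have hb : |ℓ (h x)| ≤ M₀ := by simpa [Real.norm_eq_abs] using hM₀ x hxK₀
      have h1 : ℓ (h x) ≤ M := le_trans (le_of_abs_le hb) (le_max_left _ _)
      have h2 : -M ≤ ℓ (h x) := by
        have := neg_abs_le (ℓ (h x))
        have : -M₀ ≤ ℓ (h x) := by linarith [abs_le.mp hb]
        linarith [le_max_left M₀ (0:ℝ)]
      simp only [θ, BoundedContinuousFunction.coe_ofNormedAddCommGroup, Function.comp_apply]
      rw [min_eq_left h1, max_eq_right h2]
    rw [heq]
    have hgc : Continuous fun z : C => ((g z.1).1 : ProbabilityMeasure X) :=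
      continuous_subtype_val.comp (hg.continuous.comp continuous_subtype_val)
    exact (ProbabilityMeasure.continuous_integral_boundedContinuousFunction θ).comp hgc
  -- continuity of the barycenter map
  have hc : ∀ h : C(X, E), Continuous (p h) := by
    intro h
    apply my_kspace_continuous hY
    intro C hC
    have hK₀ : IsCompact (f ⁻¹' C) := hproper.isCompact_preimage hC
    set Q₀ : Set E := closure (convexHull ℝ (⇑h '' (f ⁻¹' C))) with hQ₀def
    have hQ₀ : IsCompact Q₀ := TotallyBounded.isCompact_of_isClosed
      ((totallyBounded_convexHull.mpr (hK₀.image h.continuous).totallyBounded).closure)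
      isClosed_closure
    refine my_continuous_into_compact _ Q₀ hQ₀ (fun z => ?_) (fun ℓ => ?_)
    · refine closure_mono (convexHull_mono (Set.image_mono ?_)) (hpmem h z.1)
      exact Set.preimage_mono (Set.singleton_subset_iff.mpr z.2)
    · have : (fun z : C => ℓ (p h z.1)) = fun z : C => ∫ x, ℓ (h x) ∂μm z.1 := by
        funext z; exact hpdual h z.1 ℓ
      rw [this]
      exact hcontI h C hC ℓ
  -- the operator
  set T : C(X, E) → C(Y, E) := fun h => ⟨p h, hc h⟩ with hT
  have hTapp : ∀ (h : C(X, E)) (y : Y), T h y = p h y := fun _ _ => rfl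
  have hTadd : ∀ h₁ h₂, T (h₁ + h₂) = T h₁ + T h₂ := by
    intro h₁ h₂
    ext y
    simp [hTapp, hadd]
  have hTzero : T 0 = 0 := by
    ext y
    have : p (0 : C(X, E)) y = 0 := by
      apply hpunique
      intro ℓ
      simp
    simpa [hTapp] using this
  -- bundled additive map
  set Tadd : C(X, E) →+ C(Y, E) :=
    { toFun := T, map_zero' := hTzero, map_add' := hTadd } with hTaddDef
  -- uniform neighborhood manipulation: key entourage lemma
  have hU_setup : ∀ U ∈ 𝓤 E, ∃ D : Set E, D ∈ 𝓝 (0 : E) ∧ IsClosed D ∧ Convex ℝ D ∧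
      ∀ a b : E, b - a ∈ D → (a, b) ∈ U := by
    intro U hU
    rw [uniformity_eq_comap_nhds_zero E] at hU
    obtain ⟨V, hV, hVU⟩ := hU
    obtain ⟨D, hD, hDc, hDcvx, hDV⟩ := my_closed_convex_nhds hV
    exact ⟨D, hD, hDc, hDcvx, fun a b hab => hVU (hDV hab)⟩
  -- membership of differences
  have hdiffmem : ∀ (h₁ h₂ : C(X, E)) (y : Y) (D : Set E), IsClosed D → Convex ℝ D →
      (∀ x ∈ f ⁻¹' {y}, h₂ x - h₁ x ∈ D) → T h₂ y - T h₁ y ∈ D := by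
    intro h₁ h₂ y D hDc hDcvx hmem
    have : T h₂ y - T h₁ y = p (h₂ - h₁) y := by
      have h2 : h₂ = (h₂ - h₁) + h₁ := by abel
      rw [hTapp, hTapp]
      conv_lhs => rw [h2]
      rw [hadd]
      abel
    rw [this]
    refine closure_minimal (convexHull_min ?_ hDcvx) hDc (hpmem (h₂ - h₁) y)
    rintro _ ⟨x, hx, rfl⟩
    simpa using hmem x hx
  refine ⟨T, hTadd, ?_, fun h y => hpmem h y, ?_, ?_, ?_⟩
  · -- smul
    intro c h
    ext y
    simp [hTapp, hsmul]
  · -- averaging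
    intro φ
    ext y
    rw [hTapp]
    apply hpunique
    intro ℓ
    have : ∫ x, ℓ ((φ.comp ⟨f, hf⟩) x) ∂μm y = ∫ x, ℓ (φ y) ∂μm y := by
      refine integral_congr_ae ?_
      filter_upwards [hae y] with x hx
      simp [hx]
    rw [this, integral_const]
    simp
  · -- continuity, compact-open
    refine continuous_of_continuousAt_zero Tadd ?_
    rw [ContinuousAt, map_zero]
    rw [ContinuousMap.tendsto_iff_forall_isCompact_tendstoUniformlyOn]
    intro C hC
    intro U hU
    obtain ⟨D, hD, hDc, hDcvx, hDU⟩ := hU_setup U hU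
    have hK₀ : IsCompact (f ⁻¹' C) := hproper.isCompact_preimage hC
    -- the set of h with values in D on f⁻¹ C is a neighborhood of 0
    have hev : ∀ᶠ h : C(X, E) in 𝓝 0, ∀ x ∈ f ⁻¹' C, h x ∈ D := by
      have h1 : Filter.Tendsto (id : C(X, E) → C(X, E)) (𝓝 0) (𝓝 0) := tendsto_id
      rw [ContinuousMap.tendsto_iff_forall_isCompact_tendstoUniformlyOn] at h1
      have h2 := h1 (f ⁻¹' C) hK₀
      have hU₀ : {q : E × E | q.2 - q.1 ∈ D} ∈ 𝓤 E := by
        rw [uniformity_eq_comap_nhds_zero E]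
        exact Filter.preimage_mem_comap hD
      filter_upwards [h2 _ hU₀] with h hh
      intro x hx
      have := hh x hx
      simpa using this
    filter_upwards [hev] with h hh
    intro y hyC
    refine hDU _ _ ?_
    simp only [ContinuousMap.zero_apply, sub_zero]
    show T h y ∈ D
    refine closure_minimal (convexHull_min ?_ hDcvx) hDc (hpmem h y)
    rintro _ ⟨x, hx, rfl⟩
    exact hh x (Set.preimage_mono (Set.singleton_subset_iff.mpr hyC) hx)
  · -- continuity, uniform convergence
    rw [continuous_induced_rng]
    rw [continuous_iff_continuousAt]
    intro h₀
    set G : {u : X →ᵤ E // Continuous (UniformFun.toFun u)} → (Y →ᵤ E) := fun h =>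
      UniformFun.ofFun ⇑(T ⟨UniformFun.toFun h.1, h.2⟩) with hG
    show Filter.Tendsto G (𝓝 h₀) (𝓝 (G h₀))
    rw [(UniformFun.hasBasis_nhds Y E (G h₀)).tendsto_right_iff]
    intro U hU
    obtain ⟨D, hD, hDc, hDcvx, hDU⟩ := hU_setup U hU
    have hU₀ : {q : E × E | q.2 - q.1 ∈ D} ∈ 𝓤 E := by
      rw [uniformity_eq_comap_nhds_zero E]
      exact Filter.preimage_mem_comap hD
    have hmemS : {u : X →ᵤ E | ∀ x : X, UniformFun.toFun u x - UniformFun.toFun h₀.1 x ∈ D}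
        ∈ 𝓝 (h₀.1 : X →ᵤ E) := by
      have hb := (UniformFun.hasBasis_nhds X E h₀.1).mem_of_mem
        (i := {q : E × E | q.2 - q.1 ∈ D}) hU₀
      refine Filter.mem_of_superset hb ?_
      intro u hu
      intro x
      exact hu x
    have hev : ∀ᶠ h : {u : X →ᵤ E // Continuous (UniformFun.toFun u)} in 𝓝 h₀,
        ∀ x : X, UniformFun.toFun h.1 x - UniformFun.toFun h₀.1 x ∈ D := by
      rw [nhds_subtype_eq_comap]
      exact Filter.preimage_mem_comap hmemS
    filter_upwards [hev] with h hh
    intro y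
    refine hDU _ _ ?_
    set hC : C(X, E) := ⟨UniformFun.toFun h.1, h.2⟩
    set h₀C : C(X, E) := ⟨UniformFun.toFun h₀.1, h₀.2⟩
    show T hC y - T h₀C y ∈ D
    refine hdiffmem h₀C hC y D hDc hDcvx ?_
    intro x _
    exact hh x
end

section
/- Let f : X → Y be a perfect continuous surjection between Tychonoff topological spaces admitting an averaging operator with compact supports, and let E be a real Banach space. Then there exists a linear operator T : C(X,E) → C(Y,E) such that: (i) T(h)(y) belongs to the closed convex hull of h(f⁻¹(y)) for all y ∈ Y and h ∈ C(X,E); (ii) T(φ ∘ f) = φ for every φ ∈ C(Y,E); (iii) T is continuous when both C(X,E) and C(Y,E) carry the topology of uniform convergence, and also when both carry the topology of uniform convergence on compact sets. (No k-space assumption on Y is needed.) -/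
open MeasureTheory
open scoped UniformConvergence

open Set Filter
open scoped UniformConvergence Topology Uniformity

/-- Partition-of-unity style approximation of a continuous map on a neighborhood of a
compact set, by a finite combination of `[0,1]`-valued continuous functions times constants. -/
lemma approx_on_nbhd_of_compact {X E : Type*} [TopologicalSpace X] [T35Space X]
    [NormedAddCommGroup E] [NormedSpace ℝ E]
    (h : X → E) (hh : Continuous h) {Kf : Set X} (hKf : IsCompact Kf) {ε : ℝ} (hε : 0 < ε) :
    ∃ (V : Set X) (s : Finset X) (φ : X → X → ℝ),
      IsOpen V ∧ Kf ⊆ V ∧ (∀ i ∈ s, Continuous (φ i)) ∧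
      (∀ i ∈ s, ∀ z, φ i z ∈ Set.Icc (0:ℝ) 1) ∧
      (∀ z ∈ V, ‖(∑ i ∈ s, φ i z • h i) - h z‖ ≤ ε) := by
  have hsep : ∀ x : X, ∃ G : X → ℝ, Continuous G ∧ G x = 1 ∧ (∀ z, G z ∈ Set.Icc (0:ℝ) 1) ∧
      ∀ z, ε ≤ dist (h z) (h x) → G z = 0 := by
    intro x
    have hBo : IsOpen {z | dist (h z) (h x) < ε} :=
      isOpen_lt (continuous_dist.comp (hh.prodMk continuous_const)) continuous_const
    have hx : x ∉ {z | dist (h z) (h x) < ε}ᶜ := by simp [hε]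
    obtain ⟨u, hu, hux, huK⟩ :=
      CompletelyRegularSpace.completely_regular x _ hBo.isClosed_compl hx
    refine ⟨fun z => 1 - (u z : ℝ), by continuity, by simp [hux], fun z => ?_, fun z hz => ?_⟩
    · constructor
      · simp [(u z).2.2]
      · have := (u z).2.1; simp; linarith
    · have : u z = 1 := huK (by simpa using hz)
      simp [this]
  choose G hGc hG1 hG01 hG0 using hsep
  -- finite subcover
  have hcov : Kf ⊆ ⋃ x ∈ Kf, {z | G x z > 1/2} := by
    intro x hx
    exact Set.mem_biUnion hx (by simp [hG1 x]; norm_num)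
  obtain ⟨b, hbKf, hbfin, hbcov⟩ := hKf.elim_finite_subcover_image
    (fun x _ => isOpen_lt continuous_const (hGc x)) hcov
  classical
  set s : Finset X := hbfin.toFinset with hs
  set S : X → ℝ := fun z => ∑ i ∈ s, G i z with hS
  have hScont : Continuous S := continuous_finset_sum _ fun i _ => hGc i
  set D : X → ℝ := fun z => max (S z) (1/2) with hD
  have hDpos : ∀ z, (0:ℝ) < D z := fun z => lt_of_lt_of_le (by norm_num) (le_max_right _ _)
  have hDcont : Continuous D := hScont.max continuous_const
  set φ : X → X → ℝ := fun i z => G i z / D z with hφ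
  have hGnn : ∀ i z, 0 ≤ G i z := fun i z => (hG01 i z).1
  have hGS : ∀ i ∈ s, ∀ z, G i z ≤ S z := by
    intro i hi z
    exact Finset.single_le_sum (fun j _ => hGnn j z) hi
  refine ⟨{z | S z > 1/2}, s, φ, isOpen_lt continuous_const hScont, ?_, ?_, ?_, ?_⟩
  · -- Kf ⊆ V
    intro z hz
    obtain ⟨i, hi, hiz⟩ := Set.mem_iUnion₂.mp (hbcov hz)
    have : G i z ≤ S z := hGS i (hbfin.mem_toFinset.mpr hi) z
    exact lt_of_lt_of_le hiz this
  · intro i _; exact (hGc i).div hDcont fun z => ne_of_gt (hDpos z)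
  · intro i hi z
    constructor
    · exact div_nonneg (hGnn i z) (hDpos z).le
    · rw [div_le_one (hDpos z)]
      exact le_trans (hGS i hi z) (le_max_left _ _)
  · intro z hz
    have hSz : (1/2 : ℝ) < S z := hz
    have hDz : D z = S z := max_eq_left hSz.le
    have hSne : S z ≠ 0 := by positivity
    have hsum1 : ∑ i ∈ s, φ i z = 1 := by
      simp only [hφ, hDz, ← Finset.sum_div, ← hS]
      exact div_self hSne
    have : (∑ i ∈ s, φ i z • h i) - h z = ∑ i ∈ s, φ i z • (h i - h z) := by
      rw [eq_comm]
      simp only [smul_sub]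
      rw [Finset.sum_sub_distrib, ← Finset.sum_smul, hsum1, one_smul]
    rw [this]
    calc ‖∑ i ∈ s, φ i z • (h i - h z)‖ ≤ ∑ i ∈ s, ‖φ i z • (h i - h z)‖ :=
          norm_sum_le _ _
      _ ≤ ∑ i ∈ s, φ i z * ε := by
          apply Finset.sum_le_sum
          intro i hi
          show ‖φ i z • (h i - h z)‖ ≤ φ i z * ε
          rcases eq_or_ne (φ i z) 0 with h0 | h0
          · simp [h0]
          · have hGne : G i z ≠ 0 := by
              intro hG; apply h0; simp [hφ, hG]
            have hd : dist (h z) (h i) < ε := by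
              by_contra hc
              exact hGne (hG0 i z (le_of_not_gt hc))
            have hnorm : ‖h i - h z‖ ≤ ε := by
              rw [← dist_eq_norm, dist_comm]
              exact hd.le
            rw [norm_smul, Real.norm_eq_abs,
              abs_of_nonneg (div_nonneg (hGnn i z) (hDpos z).le)]
            exact mul_le_mul_of_nonneg_left hnorm (div_nonneg (hGnn i z) (hDpos z).le)
      _ = ε := by rw [← Finset.sum_mul, hsum1, one_mul]

/-- Let `f : X → Y` be a perfect continuous surjection of Tychonoff spaces
admitting an averaging operator with compact supports, and let `E` be a real Banach
space (no k-space assumption on `Y`). Then there is a linear operator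
`T : C(X,E) → C(Y,E)` with values in the closed convex hulls of the fiber images, which
is a right inverse to composition with `f`, and is continuous for the uniform topology
and for the topology of uniform convergence on compact sets. -/
theorem averaging_operator_banach
    {X Y E : Type*} [TopologicalSpace X] [T35Space X] [TopologicalSpace Y] [T35Space Y]
    [MeasurableSpace X] [BorelSpace X]
    (f : X → Y) (hf : Continuous f) (hfsurj : Function.Surjective f)
    (hfclosed : IsClosedMap f) (hffib : ∀ y, IsCompact (f ⁻¹' {y}))
    (g : Y → {μ : ProbabilityMeasure X //
        μ.toMeasure.InnerRegular ∧ ∃ K : Set X, IsCompact K ∧ IsMeasSupport μ.toMeasure K})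
    (hg : Topology.IsEmbedding g)
    (hgsupp : ∀ (y : Y) (K : Set X), IsMeasSupport (g y).1.toMeasure K → K ⊆ f ⁻¹' {y})
    [NormedAddCommGroup E] [NormedSpace ℝ E] [CompleteSpace E] :
    ∃ T : C(X, E) → C(Y, E),
      (∀ h₁ h₂, T (h₁ + h₂) = T h₁ + T h₂) ∧
      (∀ (c : ℝ) h, T (c • h) = c • T h) ∧
      -- (i) values in closed convex hulls of fiber images
      (∀ (h : C(X, E)) (y : Y), T h y ∈ closure (convexHull ℝ (⇑h '' (f ⁻¹' {y})))) ∧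
      -- (ii) averaging property
      (∀ φ : C(Y, E), T (φ.comp ⟨f, hf⟩) = φ) ∧
      -- (iii) continuity for the topology of uniform convergence on compact sets
      Continuous T ∧
      -- (iii) continuity for the topology of uniform convergence
      Continuous (fun h : {u : X →ᵤ E // Continuous (UniformFun.toFun u)} =>
        (⟨UniformFun.ofFun ⇑(T ⟨UniformFun.toFun h.1, h.2⟩),
          (T ⟨UniformFun.toFun h.1, h.2⟩).continuous⟩ :
          {u : Y →ᵤ E // Continuous (UniformFun.toFun u)})) := by
  classical
  choose K hKc hKmeas using fun y => (g y).2.2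
  have hKfib : ∀ y, K y ⊆ f ⁻¹' {y} := fun y => hgsupp y (K y) (hKmeas y)
  have hae : ∀ y, ∀ᵐ x ∂(g y).1.toMeasure, x ∈ K y := by
    intro y
    rw [MeasureTheory.ae_iff]
    exact (hKmeas y).2.1
  -- integrability of continuous functions
  have hint : ∀ (h : X → E), Continuous h → ∀ y, Integrable h (g y).1.toMeasure := by
    intro h hh y
    have hres : (g y).1.toMeasure.restrict (K y) = (g y).1.toMeasure :=
      Measure.restrict_eq_self_of_ae_mem (hae y)
    rw [← hres]
    exact hh.continuousOn.integrableOn_compact (hKc y)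
  -- key estimate
  have key : ∀ (h₁ h₂ : X → E), Continuous h₁ → Continuous h₂ → ∀ (y : Y) (c : ℝ),
      (∀ x ∈ f ⁻¹' {y}, ‖h₁ x - h₂ x‖ ≤ c) →
      ‖(∫ x, h₁ x ∂(g y).1.toMeasure) - ∫ x, h₂ x ∂(g y).1.toMeasure‖ ≤ c := by
    intro h₁ h₂ hc1 hc2 y c hb
    rw [← integral_sub (hint _ hc1 y) (hint _ hc2 y)]
    have hbd : ∀ᵐ x ∂(g y).1.toMeasure, ‖h₁ x - h₂ x‖ ≤ c := by
      filter_upwards [hae y] with x hx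
      exact hb x (hKfib y hx)
    have := norm_integral_le_of_norm_le_const hbd
    simpa [measure_univ] using this
  -- continuity of integrals of bounded continuous real functions
  have hintcont : ∀ (φ : X → ℝ), Continuous φ → (∀ z, φ z ∈ Set.Icc (0:ℝ) 1) →
      Continuous (fun y => ∫ x, φ x ∂(g y).1.toMeasure) := by
    intro φ hφ hφ01
    set Φ : BoundedContinuousFunction X ℝ :=
      BoundedContinuousFunction.mkOfBound ⟨φ, hφ⟩ 1
        (fun a b => Real.dist_le_of_mem_Icc_01 (hφ01 a) (hφ01 b)) with hΦ
    have : (fun y => ∫ x, φ x ∂(g y).1.toMeasure)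
        = (fun μ : ProbabilityMeasure X => ∫ x, Φ x ∂(μ : Measure X)) ∘ (fun y => (g y).1) :=
      rfl
    rw [this]
    exact (ProbabilityMeasure.continuous_integral_boundedContinuousFunction Φ).comp
      (continuous_subtype_val.comp hg.continuous)
  -- continuity of the averaged function
  have hcont : ∀ (h : X → E), Continuous h →
      Continuous fun y => ∫ x, h x ∂(g y).1.toMeasure := by
    intro h hh
    rw [continuous_iff_continuousAt]
    intro y₀
    rw [ContinuousAt, Metric.tendsto_nhds]
    intro ε hε
    obtain ⟨V, s, φ, hVo, hKV, hφc, hφ01, happ⟩ :=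
      approx_on_nbhd_of_compact h hh (hffib y₀) (show (0:ℝ) < ε/4 by linarith)
    set ψ : X → E := fun z => ∑ i ∈ s, φ i z • h i with hψ
    have hψc : Continuous ψ :=
      continuous_finset_sum _ fun i hi => (hφc i hi).smul continuous_const
    have hψint : Continuous fun y => ∫ x, ψ x ∂(g y).1.toMeasure := by
      have heq : ∀ y, (∫ x, ψ x ∂(g y).1.toMeasure)
          = ∑ i ∈ s, (∫ x, φ i x ∂(g y).1.toMeasure) • h i := by
        intro y
        rw [integral_finset_sum _
          (fun i hi => hint (fun x => φ i x • h i) ((hφc i hi).smul continuous_const) y)]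
        exact Finset.sum_congr rfl fun i hi => integral_smul_const (φ i) (h i)
      simp only [heq]
      exact continuous_finset_sum _ fun i hi =>
        (hintcont (φ i) (hφc i hi) (hφ01 i hi)).smul continuous_const
    set W : Set Y := (f '' Vᶜ)ᶜ with hW
    have hWo : IsOpen W := (hfclosed _ hVo.isClosed_compl).isOpen_compl
    have hy₀W : y₀ ∈ W := by
      intro hmem
      obtain ⟨x, hxV, hxy⟩ := hmem
      exact hxV (hKV (by simp [hxy]))
    have hWV : ∀ y ∈ W, f ⁻¹' {y} ⊆ V := by
      intro y hy x hx
      by_contra hxV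
      exact hy ⟨x, hxV, hx⟩
    have hev2 : ∀ᶠ y in 𝓝 y₀,
        dist (∫ x, ψ x ∂(g y).1.toMeasure) (∫ x, ψ x ∂(g y₀).1.toMeasure) < ε/4 :=
      Metric.tendsto_nhds.mp (hψint.continuousAt (x := y₀)) (ε/4) (by linarith)
    filter_upwards [hWo.mem_nhds hy₀W, hev2] with y hyW hyd
    have happ' : ∀ z ∈ V, ‖h z - ψ z‖ ≤ ε/4 := by
      intro z hz
      have := happ z hz
      rwa [norm_sub_rev]
    have h1 : ‖(∫ x, h x ∂(g y).1.toMeasure) - ∫ x, ψ x ∂(g y).1.toMeasure‖ ≤ ε/4 :=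
      key h ψ hh hψc y (ε/4) fun x hx => happ' x (hWV y hyW hx)
    have h0 : ‖(∫ x, ψ x ∂(g y₀).1.toMeasure) - ∫ x, h x ∂(g y₀).1.toMeasure‖ ≤ ε/4 := by
      have := key ψ h hψc hh y₀ (ε/4) fun x hx => by
        rw [norm_sub_rev]; exact happ' x (hKV hx)
      exact this
    have htri := dist_triangle4 (∫ x, h x ∂(g y).1.toMeasure)
      (∫ x, ψ x ∂(g y).1.toMeasure) (∫ x, ψ x ∂(g y₀).1.toMeasure)
      (∫ x, h x ∂(g y₀).1.toMeasure)
    simp only [dist_eq_norm] at htri hyd ⊢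
    linarith
  -- membership in closed convex hulls
  have hmem : ∀ (h : X → E), Continuous h → ∀ y,
      (∫ x, h x ∂(g y).1.toMeasure) ∈ closure (convexHull ℝ (h '' (f ⁻¹' {y}))) := by
    intro h hh y
    by_contra hnot
    obtain ⟨L, c, hLlt, hcL⟩ := geometric_hahn_banach_closed_point
      (convex_convexHull ℝ _).closure isClosed_closure hnot
    have hLint : (∫ x, L (h x) ∂(g y).1.toMeasure)
        = L (∫ x, h x ∂(g y).1.toMeasure) :=
      L.integral_comp_comm (hint h hh y)
    have hble : (∫ x, L (h x) ∂(g y).1.toMeasure) ≤ c := by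
      have hle : ∀ᵐ x ∂(g y).1.toMeasure, L (h x) ≤ c := by
        filter_upwards [hae y] with x hx
        exact (hLlt _ (subset_closure (subset_convexHull ℝ _ ⟨x, hKfib y hx, rfl⟩))).le
      calc (∫ x, L (h x) ∂(g y).1.toMeasure)
          ≤ ∫ _, c ∂(g y).1.toMeasure :=
            integral_mono_ae (L.integrable_comp (hint h hh y)) (integrable_const c) hle
        _ = c := by simp [measure_univ]
    rw [hLint] at hble
    linarith
  -- the averaging property
  have havg : ∀ (φ : C(Y, E)) (y : Y), (∫ x, φ (f x) ∂(g y).1.toMeasure) = φ y := by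
    intro φ y
    have hcongr : (fun x => φ (f x)) =ᵐ[(g y).1.toMeasure] fun _ => φ y := by
      filter_upwards [hae y] with x hx
      have : f x = y := hKfib y hx
      rw [this]
    rw [integral_congr_ae hcongr, integral_const]
    simp [measure_univ]
  refine ⟨fun h => ⟨fun y => ∫ x, h x ∂(g y).1.toMeasure, hcont _ h.continuous⟩,
    ?_, ?_, ?_, ?_, ?_, ?_⟩
  · intro h₁ h₂
    ext y
    simp only [ContinuousMap.coe_mk, ContinuousMap.add_apply, ContinuousMap.coe_add,
      Pi.add_apply]
    exact integral_add (hint _ h₁.continuous y) (hint _ h₂.continuous y)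
  · intro c h
    ext y
    simp only [ContinuousMap.coe_mk, ContinuousMap.smul_apply, ContinuousMap.coe_smul,
      Pi.smul_apply]
    exact integral_smul c _
  · intro h y
    exact hmem h h.continuous y
  · intro φ
    ext y
    exact havg φ y
  · -- continuity, compact-open topologies
    rw [continuous_iff_continuousAt]
    intro h₀
    rw [ContinuousAt, ContinuousMap.tendsto_iff_forall_isCompact_tendstoUniformlyOn]
    intro L hL
    rw [Metric.tendstoUniformlyOn_iff]
    intro ε hε
    have hKL : IsCompact (f ⁻¹' L) :=
      (isProperMap_iff_isClosedMap_and_compact_fibers.mpr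
        ⟨hf, hfclosed, hffib⟩).isCompact_preimage hL
    have hdom : TendstoUniformlyOn (fun (h : C(X,E)) x => h x) (⇑h₀) (𝓝 h₀) (f ⁻¹' L) :=
      ContinuousMap.tendsto_iff_forall_isCompact_tendstoUniformlyOn.mp tendsto_id _ hKL
    rw [Metric.tendstoUniformlyOn_iff] at hdom
    filter_upwards [hdom (ε/2) (by linarith)] with h hh y hy
    rw [dist_eq_norm]
    have hb : ∀ x ∈ f ⁻¹' {y}, ‖h₀ x - h x‖ ≤ ε/2 := by
      intro x hx
      have hxL : x ∈ f ⁻¹' L := by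
        simp only [mem_preimage, mem_singleton_iff] at hx
        simp [mem_preimage, hx, hy]
      have := hh x hxL
      rw [dist_eq_norm] at this
      exact this.le
    calc ‖(∫ x, h₀ x ∂(g y).1.toMeasure) - ∫ x, h x ∂(g y).1.toMeasure‖
        ≤ ε/2 := key _ _ h₀.continuous h.continuous y (ε/2) hb
      _ < ε := by linarith
  · -- continuity, uniform convergence topologies
    apply UniformContinuous.continuous
    apply UniformContinuous.subtype_mk
    rw [UniformContinuous,
      (UniformFun.hasBasis_uniformity_of_basis Y E Metric.uniformity_basis_dist).tendsto_right_iff]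
    intro ε hε
    have hbase : UniformFun.gen X E {p : E × E | dist p.1 p.2 < ε/2} ∈ 𝓤 (X →ᵤ E) :=
      (UniformFun.hasBasis_uniformity_of_basis X E Metric.uniformity_basis_dist).mem_of_mem
        (by linarith : (0:ℝ) < ε/2)
    have hmem' : (fun q : {u : X →ᵤ E // Continuous (UniformFun.toFun u)} ×
          {u : X →ᵤ E // Continuous (UniformFun.toFun u)} => (q.1.1, q.2.1)) ⁻¹'
          (UniformFun.gen X E {p : E × E | dist p.1 p.2 < ε/2})
        ∈ 𝓤 ({u : X →ᵤ E // Continuous (UniformFun.toFun u)}) := by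
      rw [uniformity_subtype]
      exact preimage_mem_comap hbase
    filter_upwards [hmem'] with q hq
    simp only [UniformFun.gen, Set.mem_setOf_eq] at hq ⊢
    intro y
    show dist (∫ x, (UniformFun.toFun q.1.1) x ∂(g y).1.toMeasure)
      (∫ x, (UniformFun.toFun q.2.1) x ∂(g y).1.toMeasure) < ε
    rw [dist_eq_norm]
    have hb : ∀ x ∈ f ⁻¹' {y},
        ‖(UniformFun.toFun q.1.1) x - (UniformFun.toFun q.2.1) x‖ ≤ ε/2 := by
      intro x _
      have := hq x
      rw [dist_eq_norm] at this
      exact this.le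
    calc ‖(∫ x, (UniformFun.toFun q.1.1) x ∂(g y).1.toMeasure)
          - ∫ x, (UniformFun.toFun q.2.1) x ∂(g y).1.toMeasure‖
        ≤ ε/2 := key _ _ q.1.2 q.2.2 y (ε/2) hb
      _ < ε := by linarith
end

section
/- Let X be a metric space, A ⊆ X a closed subset, and E a complete Hausdorff locally convex real topological vector space. Then there exists a linear extension operator S : C(A,E) → C(X,E), i.e., a linear operator such that S(h)(x) = h(x) for every h ∈ C(A,E) and every x ∈ A. -/
open Metric Set Function

/-- Let `X` be a metric space, `A ⊆ X` closed, and `E` a complete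
Hausdorff locally convex real TVS. Then there is a linear extension operator
`S : C(A,E) → C(X,E)`, i.e. a linear operator with `S h x = h x` for all `h ∈ C(A,E)`
and `x ∈ A`. -/
theorem dugundji_extension_metric
    {X E : Type*} [MetricSpace X] (A : Set X) (hA : IsClosed A)
    [AddCommGroup E] [Module ℝ E] [UniformSpace E] [IsUniformAddGroup E]
    [ContinuousSMul ℝ E] [LocallyConvexSpace ℝ E] [T2Space E] [CompleteSpace E] :
    ∃ S : C(A, E) → C(X, E),
      (∀ f g, S (f + g) = S f + S g) ∧
      (∀ (c : ℝ) f, S (c • f) = c • S f) ∧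
      (∀ (h : C(A, E)) (x : X) (hx : x ∈ A), S h x = h ⟨x, hx⟩) := by
  classical
  rcases A.eq_empty_or_nonempty with rfl | hne
  · exact ⟨fun _ => 0, fun _ _ => by simp, fun _ _ => by simp, fun _ _ hx => absurd hx (by simp)⟩
  set Y := ↥(Aᶜ) with hY
  have hDpos : ∀ c : Y, 0 < infDist (c : X) A := fun c =>
    (hA.notMem_iff_infDist_pos hne).1 c.2
  set V : Y → Set Y := fun c => Metric.ball c (infDist (c : X) A / 3) with hV
  obtain ⟨f, hf⟩ : ∃ f : PartitionOfUnity Y Y univ, f.IsSubordinate V :=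
    PartitionOfUnity.exists_isSubordinate isClosed_univ V (fun c => isOpen_ball)
      (fun y _ => mem_iUnion.2 ⟨y, mem_ball_self (by have := hDpos y; linarith)⟩)
  have hsel : ∀ c : Y, ∃ p : A, dist (c : X) (p : X) < 2 * infDist (c : X) A := by
    intro c
    obtain ⟨p, hp, hd⟩ := (infDist_lt_iff hne).1
      (show infDist (c : X) A < 2 * infDist (c : X) A by have := hDpos c; linarith)
    exact ⟨⟨p, hp⟩, hd⟩
  choose a hda using hsel
  have key : ∀ (y : Y) (x0 : X), x0 ∈ A → ∀ i : Y, f i y ≠ 0 →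
      dist (a i : X) x0 < 5 * dist (y : X) x0 := by
    intro y x0 hx0 i hi
    have hyi : y ∈ V i := hf i (subset_tsupport _ (by exact hi))
    rw [hV, mem_ball, Subtype.dist_eq] at hyi
    have h1 : infDist (i : X) A ≤ dist (i : X) x0 := infDist_le_dist_of_mem hx0
    have h2 : dist (i : X) x0 ≤ dist (i : X) (y : X) + dist (y : X) x0 := dist_triangle _ _ _
    have h3 : dist (i : X) (y : X) = dist (y : X) (i : X) := dist_comm _ _
    have h4 : dist (a i : X) x0 ≤ dist (a i : X) (i : X) + dist (i : X) (y : X) + dist (y : X) x0 :=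
      dist_triangle4 _ _ _ _
    have h5 : dist (a i : X) (i : X) = dist (i : X) (a i : X) := dist_comm _ _
    have := hda i
    nlinarith [hDpos i]
  have hcont : ∀ h : C(A, E), Continuous fun x : X =>
      if hx : x ∈ A then h ⟨x, hx⟩ else ∑ᶠ i : Y, f i ⟨x, hx⟩ • h (a i) := by
    intro h
    set g : X → E := fun x =>
      if hx : x ∈ A then h ⟨x, hx⟩ else ∑ᶠ i : Y, f i ⟨x, hx⟩ • h (a i) with hg
    have hGc : Continuous fun y : Y => ∑ᶠ i : Y, f i y • h (a i) :=
      f.continuous_finsum_smul fun i x _ => continuousAt_const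
    have hcompl : ContinuousOn g Aᶜ := by
      rw [continuousOn_iff_continuous_restrict]
      convert hGc using 1
      ext y
      simp only [hg, restrict_apply]
      rw [dif_neg y.2]
    rw [continuous_iff_continuousAt]
    intro x0
    by_cases hx0 : x0 ∈ A
    · have hg0 : g x0 = h ⟨x0, hx0⟩ := by rw [hg]; exact dif_pos hx0
      rw [ContinuousAt, hg0]
      refine (LocallyConvexSpace.convex_basis (𝕜 := ℝ) (h ⟨x0, hx0⟩)).tendsto_right_iff.2 ?_
      rintro W ⟨hW, hWc⟩
      have hhc : ∀ᶠ p : A in nhds ⟨x0, hx0⟩, h p ∈ W := (h.continuousAt ⟨x0, hx0⟩) hW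
      rw [Metric.eventually_nhds_iff] at hhc
      obtain ⟨δ, hδ, hδW⟩ := hhc
      have hδ5 : 0 < δ / 5 := by positivity
      filter_upwards [Metric.ball_mem_nhds x0 hδ5] with x hx
      rw [mem_ball] at hx
      simp only [id]
      by_cases hxA : x ∈ A
      · have hgx : g x = h ⟨x, hxA⟩ := by rw [hg]; exact dif_pos hxA
        rw [hgx]
        exact hδW (show dist (⟨x, hxA⟩ : A) ⟨x0, hx0⟩ < δ by rw [Subtype.dist_eq]; linarith)
      · set y : Y := ⟨x, hxA⟩ with hy
        have hgx : g x = ∑ᶠ i : Y, f i y • h (a i) := by rw [hg]; exact dif_neg hxA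
        rw [hgx]
        have hfin : {i : Y | f i y ≠ 0}.Finite := f.locallyFinite.point_finite y
        set s : Finset Y := hfin.toFinset with hs
        have hmem : ∀ i : Y, i ∈ s ↔ f i y ≠ 0 := fun i => hfin.mem_toFinset
        have hsum1 : ∑ i ∈ s, f i y = 1 := by
          rw [← finsum_eq_sum_of_support_subset]
          · exact f.sum_eq_one (mem_univ y)
          · intro i hi
            exact (hmem i).2 hi
        have hsum2 : ∑ᶠ i : Y, f i y • h (a i) = ∑ i ∈ s, f i y • h (a i) := by
          apply finsum_eq_sum_of_support_subset
          intro i hi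
          have : f i y ≠ 0 := by
            intro h0
            apply hi
            simp [Function.mem_support, h0]
          exact (hmem i).2 this
        rw [hsum2]
        refine hWc.sum_mem (fun i _ => f.nonneg i y) hsum1 (fun i hi => ?_)
        have hine : f i y ≠ 0 := (hmem i).1 hi
        have hd := key y x0 hx0 i hine
        apply hδW
        rw [Subtype.dist_eq]
        have hyx : dist (y : X) x0 = dist x x0 := rfl
        calc dist (a i : X) x0 < 5 * dist (y : X) x0 := hd
          _ < δ := by rw [hyx]; linarith
    · exact hcompl.continuousAt (hA.isOpen_compl.mem_nhds hx0)
  refine ⟨fun h => ⟨_, hcont h⟩, ?_, ?_, ?_⟩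
  · intro h₁ h₂
    ext x
    simp only [ContinuousMap.coe_mk, ContinuousMap.add_apply]
    by_cases hx : x ∈ A
    · rw [dif_pos hx, dif_pos hx, dif_pos hx]
    · rw [dif_neg hx, dif_neg hx, dif_neg hx]
      simp only [smul_add]
      rw [finsum_add_distrib]
      · exact ((f.locallyFinite.point_finite ⟨x, hx⟩).subset
          (support_smul_subset_left _ _))
      · exact ((f.locallyFinite.point_finite ⟨x, hx⟩).subset
          (support_smul_subset_left _ _))
  · intro c h
    ext x
    simp only [ContinuousMap.coe_mk, ContinuousMap.smul_apply]
    by_cases hx : x ∈ A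
    · rw [dif_pos hx, dif_pos hx]
    · rw [dif_neg hx, dif_neg hx]
      have hfin : (Function.support fun i : Y => f i (⟨x, hx⟩ : Y) • h (a i)).Finite :=
        (f.locallyFinite.point_finite ⟨x, hx⟩).subset
          (Function.support_smul_subset_left (fun i : Y => f i (⟨x, hx⟩ : Y))
            (fun i : Y => h (a i)))
      exact (finsum_congr fun i => smul_comm ((f i) (⟨x, hx⟩ : Y)) c (h (a i))).trans
        (smul_finsum' c hfin).symm
  · intro h x hx
    simp only [ContinuousMap.coe_mk]
    rw [dif_pos hx]
end
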